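/- For any vectors r1, r2 in R^K and temperature τ > 0, the soft indmax policy f_τ(r)(i) = exp((r(i) − F_τ(r))/τ), where F_τ(r) = τ log ∑_j exp(r(j)/τ), satisfies ‖f_τ(r1) − f_τ(r2)‖_∞ ≤ (2/τ)·‖r1 − r2‖_∞. -/

import Mathlib

open Real Finset

/-- Temperature-scaled log-sum-exp. -/
noncomputable def lse (K : ℕ) (τ : ℝ) (r : Fin K → ℝ) : ℝ :=
  τ * Real.log (∑ i, Real.exp (r i / τ))

/-- Soft indmax (softmax) distribution. -/
noncomputable def softmax (K : ℕ) (τ : ℝ) (r : Fin K → ℝ) : Fin K → ℝ :=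
  fun i => Real.exp ((r i - lse K τ r) / τ)

lemma exp_lipschitz_nonpos {a b : ℝ} (ha : a ≤ 0) (hb : b ≤ 0) :
    |Real.exp a - Real.exp b| ≤ |a - b| := by
  wlog h : b ≤ a generalizing a b
  · rw [abs_sub_comm, abs_sub_comm a b]; exact this hb ha (le_of_not_ge h)
  rw [abs_of_nonneg (sub_nonneg.2 (Real.exp_le_exp.2 h)),
      abs_of_nonneg (sub_nonneg.2 h)]
  have h1 : Real.exp a - Real.exp b = Real.exp b * (Real.exp (a - b) - 1) := by
    rw [mul_sub, ← Real.exp_add]; ring_nf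
  rw [h1]
  have h2 : Real.exp (a - b) - 1 ≤ (a - b) * Real.exp (a - b) := by
    have h3 : 1 - (a - b) ≤ Real.exp (-(a - b)) := by
      linarith [Real.add_one_le_exp (-(a - b))]
    have h4 := mul_le_mul_of_nonneg_left h3 (Real.exp_pos (a - b)).le
    have h5 : Real.exp (a - b) * Real.exp (-(a - b)) = 1 := by
      rw [← Real.exp_add]; simp
    nlinarith
  have hba : Real.exp b * Real.exp (a - b) = Real.exp a := by
    rw [← Real.exp_add]; ring_nf
  calc Real.exp b * (Real.exp (a - b) - 1)
      ≤ Real.exp b * ((a - b) * Real.exp (a - b)) := by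
        exact mul_le_mul_of_nonneg_left h2 (Real.exp_pos b).le
    _ = (a - b) * Real.exp a := by linear_combination (a - b) * hba
    _ ≤ (a - b) * 1 := by
        exact mul_le_mul_of_nonneg_left (Real.exp_le_one_iff.2 ha) (sub_nonneg.2 h)
    _ = a - b := mul_one _

lemma lse_le (K : ℕ) (hK : 1 ≤ K) {τ : ℝ} (hτ : 0 < τ) (r1 r2 : Fin K → ℝ) :
    lse K τ r1 ≤ lse K τ r2 + ‖r1 - r2‖ := by
  have hne : (Finset.univ : Finset (Fin K)).Nonempty := by
    simpa [Finset.univ_nonempty_iff] using Fin.pos_iff_nonempty.1 hK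
  have hpos : ∀ (r : Fin K → ℝ), 0 < ∑ i, Real.exp (r i / τ) := fun r =>
    Finset.sum_pos (fun i _ => Real.exp_pos _) hne
  have hle : ∑ i, Real.exp (r1 i / τ) ≤
      Real.exp (‖r1 - r2‖ / τ) * ∑ i, Real.exp (r2 i / τ) := by
    rw [Finset.mul_sum]
    refine Finset.sum_le_sum fun i _ => ?_
    rw [← Real.exp_add]
    apply Real.exp_le_exp.2
    rw [← add_div, div_le_div_iff_of_pos_right hτ]
    have := norm_le_pi_norm (r1 - r2) i
    rw [Pi.sub_apply, Real.norm_eq_abs] at this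
    linarith [abs_le.1 this]
  have hlog := Real.log_le_log (hpos r1) hle
  rw [Real.log_mul (Real.exp_pos _).ne' (hpos r2).ne', Real.log_exp] at hlog
  unfold lse
  calc τ * Real.log (∑ i, Real.exp (r1 i / τ))
      ≤ τ * (‖r1 - r2‖ / τ + Real.log (∑ i, Real.exp (r2 i / τ))) :=
        mul_le_mul_of_nonneg_left hlog hτ.le
    _ = τ * Real.log (∑ i, Real.exp (r2 i / τ)) + ‖r1 - r2‖ := by
        field_simp; ring

lemma softmax_arg_nonpos (K : ℕ) {τ : ℝ} (hτ : 0 < τ) (r : Fin K → ℝ) (i : Fin K) :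
    (r i - lse K τ r) / τ ≤ 0 := by
  apply div_nonpos_of_nonpos_of_nonneg _ hτ.le
  rw [sub_nonpos]
  unfold lse
  rw [← div_le_iff₀' hτ, ← Real.log_exp (r i / τ)]
  apply Real.log_le_log (Real.exp_pos _)
  exact Finset.single_le_sum (f := fun j => Real.exp (r j / τ))
    (fun j _ => (Real.exp_pos _).le) (Finset.mem_univ i)

theorem softmax_lipschitz (K : ℕ) (hK : 1 ≤ K) (τ : ℝ) (hτ : 0 < τ)
    (r1 r2 : Fin K → ℝ) :
    ‖softmax K τ r1 - softmax K τ r2‖ ≤ (2 / τ) * ‖r1 - r2‖ := by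
  have hnn : 0 ≤ (2 / τ) * ‖r1 - r2‖ :=
    mul_nonneg (by positivity) (norm_nonneg _)
  rw [pi_norm_le_iff_of_nonneg hnn]
  intro i
  rw [Pi.sub_apply, Real.norm_eq_abs]
  unfold softmax
  have hlse : |lse K τ r1 - lse K τ r2| ≤ ‖r1 - r2‖ := by
    rw [abs_le]
    constructor
    · have := lse_le K hK hτ r2 r1
      rw [show r2 - r1 = -(r1 - r2) by ring, norm_neg] at this
      linarith
    · linarith [lse_le K hK hτ r1 r2]
  have hri : |r1 i - r2 i| ≤ ‖r1 - r2‖ := by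
    have := norm_le_pi_norm (r1 - r2) i
    rwa [Pi.sub_apply, Real.norm_eq_abs] at this
  calc |Real.exp ((r1 i - lse K τ r1) / τ) - Real.exp ((r2 i - lse K τ r2) / τ)|
      ≤ |(r1 i - lse K τ r1) / τ - (r2 i - lse K τ r2) / τ| :=
        exp_lipschitz_nonpos (softmax_arg_nonpos K hτ r1 i) (softmax_arg_nonpos K hτ r2 i)
    _ = |(r1 i - r2 i) - (lse K τ r1 - lse K τ r2)| / τ := by
        rw [div_sub_div_same, abs_div, abs_of_pos hτ]; ring_nf
    _ ≤ (‖r1 - r2‖ + ‖r1 - r2‖) / τ := by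
        have htri : |(r1 i - r2 i) - (lse K τ r1 - lse K τ r2)| ≤
            |r1 i - r2 i| + |lse K τ r1 - lse K τ r2| := by
          rw [sub_eq_add_neg]
          exact (abs_add_le _ _).trans (by rw [abs_neg])
        gcongr
        linarith
    _ = (2 / τ) * ‖r1 - r2‖ := by ring
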